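/- Let G=(V,E) be a finite undirected graph with nonnegative vertex costs c : V → ℝ_{≥0}. The integrality gap of the LP relaxation min{Σ_{u∈V} c_u x_u : x ∈ Q_orient(G)} of the pseudoforest deletion set problem is at most 3: for every x ∈ Q_orient(G), there exists a pseudoforest deletion set U ⊆ V such that Σ_{u∈U} c(u) ≤ 3 · Σ_{u∈V} c(u) x_u. -/

import Mathlib

/- Common definitions for the polyhedral study of FVS / PFDS. -/

open scoped Classical
open Finset

namespace FVS

noncomputable section

variable {V : Type*}

/-- Degree of `u` in the subgraph of `G` induced on the vertex set `S`. -/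
def degIn [Fintype V] (G : SimpleGraph V) (S : Finset V) (u : V) : ℕ :=
  (S.filter fun v => G.Adj u v).card

/-- Number of edges of `G` with both endpoints in `S`, i.e. `|E[S]|`. -/
def edgesIn [Fintype V] (G : SimpleGraph V) (S : Finset V) : ℕ :=
  (G.edgeFinset.filter fun e => ∀ v ∈ e, v ∈ S).card

/-- A finite graph is a pseudoforest if each connected component has at most as many
edges as vertices. -/
def IsPseudoforest {W : Type*} [Fintype W] (H : SimpleGraph W) : Prop :=
  ∀ C : H.ConnectedComponent,
    (H.edgeFinset.filter fun e => ∀ v ∈ e, H.connectedComponentMk v = C).card ≤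
      (Finset.univ.filter fun v => H.connectedComponentMk v = C).card

/-- `U` is a pseudoforest deletion set for `G`: `G - U` is a pseudoforest. -/
def IsPFDS [Fintype V] (G : SimpleGraph V) (U : Finset V) : Prop :=
  IsPseudoforest (G.induce {v : V | v ∉ U})

/-- `F` is a feedback vertex set for `G`: `G - F` is acyclic. -/
def IsFVS [Fintype V] (G : SimpleGraph V) (F : Finset V) : Prop :=
  (G.induce {v : V | v ∉ F}).IsAcyclic

/-- Membership in the orientation polyhedron `P_orient(G)`: for every edge `e = uv`,
`x_u + x_v + y_{e,u} + y_{e,v} ≥ 1`; for every vertex `u`,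
`x_u + Σ_{e ∈ δ(u)} y_{e,u} ≤ 1`; and all variables are nonnegative.  The variables
`y e u` for pairs `(e, u)` where `e` is not an edge of `G` or `u` is not an endpoint
of `e` do not occur in the formulation and are pinned to `0`. -/
def POrient [Fintype V] (G : SimpleGraph V) (x : V → ℝ) (y : Sym2 V → V → ℝ) : Prop :=
  (∀ u v, G.Adj u v → 1 ≤ x u + x v + y s(u, v) u + y s(u, v) v) ∧
  (∀ u, x u + ∑ e ∈ G.edgeFinset.filter (fun e => u ∈ e), y e u ≤ 1) ∧
  (∀ u, 0 ≤ x u) ∧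
  (∀ e u, 0 ≤ y e u) ∧
  (∀ e u, ¬ (e ∈ G.edgeSet ∧ u ∈ e) → y e u = 0)

/-- Membership in `Q_orient(G)`, the projection of `P_orient(G)` to the `x`-variables. -/
def QOrient [Fintype V] (G : SimpleGraph V) (x : V → ℝ) : Prop :=
  ∃ y : Sym2 V → V → ℝ, POrient G x y

/-- Membership in the weak density polyhedron `P_WD(G)`:
`x ≥ 0` and `Σ_{u ∈ S} (d_S(u) - 1) x_u ≥ |E[S]| - |S|` for every `S ⊆ V`. -/
def PWD [Fintype V] (G : SimpleGraph V) (x : V → ℝ) : Prop :=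
  (∀ u, 0 ≤ x u) ∧
  ∀ S : Finset V, (edgesIn G S : ℝ) - S.card ≤ ∑ u ∈ S, ((degIn G S u : ℝ) - 1) * x u

/-- Membership in the strong density polyhedron `P_SD(G)`:
`x ≥ 0` and `Σ_{u ∈ S} (d_S(u) - 1) x_u ≥ |E[S]| - |S| + 1` whenever `E[S] ≠ ∅`. -/
def PSD [Fintype V] (G : SimpleGraph V) (x : V → ℝ) : Prop :=
  (∀ u, 0 ≤ x u) ∧
  ∀ S : Finset V, edgesIn G S ≠ 0 →
    (edgesIn G S : ℝ) - S.card + 1 ≤ ∑ u ∈ S, ((degIn G S u : ℝ) - 1) * x u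

/-- The induced subgraph `G[U]` is a cycle: it is connected and `2`-regular. -/
def IsInducedCycle [Fintype V] (G : SimpleGraph V) (U : Finset V) : Prop :=
  (G.induce (U : Set V)).Connected ∧ ∀ u ∈ U, degIn G U u = 2

/-- Membership in the cycle cover polyhedron `P_cycle-cover(G)`. -/
def PCycleCover [Fintype V] (G : SimpleGraph V) (x : V → ℝ) : Prop :=
  (∀ u, 0 ≤ x u) ∧ ∀ U : Finset V, IsInducedCycle G U → 1 ≤ ∑ u ∈ U, x u

/-- The induced subgraph `G[U]` is a `2`-pseudotree: connected with at least `|U| + 1` edges. -/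
def Is2PseudotreeInduced [Fintype V] (G : SimpleGraph V) (U : Finset V) : Prop :=
  (G.induce (U : Set V)).Connected ∧ U.card + 1 ≤ edgesIn G U

/-- Membership in the `2`-pseudotree cover polyhedron `P_2PT-cover(G)`. -/
def P2PTCover [Fintype V] (G : SimpleGraph V) (x : V → ℝ) : Prop :=
  (∀ u, 0 ≤ x u) ∧ ∀ U : Finset V, Is2PseudotreeInduced G U → 1 ≤ ∑ u ∈ U, x u

/-- `(x, y)` is an extreme point of `P_orient(G)`: it is feasible and is not a proper
convex combination of two distinct points of `P_orient(G)`. -/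
def POrientExtreme [Fintype V] (G : SimpleGraph V) (x : V → ℝ) (y : Sym2 V → V → ℝ) : Prop :=
  POrient G x y ∧
    ∀ (x₁ x₂ : V → ℝ) (y₁ y₂ : Sym2 V → V → ℝ) (t : ℝ),
      POrient G x₁ y₁ → POrient G x₂ y₂ → 0 < t → t < 1 →
      (∀ v, x v = t * x₁ v + (1 - t) * x₂ v) →
      (∀ e u, y e u = t * y₁ e u + (1 - t) * y₂ e u) →
      x₁ = x₂ ∧ y₁ = y₂

/-- `(x, y)` is a minimal point of `P_orient(G)`: decreasing any single coordinate by
any `ε > 0`, keeping the other coordinates unchanged, yields a point outside the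
polyhedron. -/
def POrientMinimal [Fintype V] (G : SimpleGraph V) (x : V → ℝ) (y : Sym2 V → V → ℝ) : Prop :=
  (∀ v, ∀ ε : ℝ, 0 < ε → ¬ POrient G (Function.update x v (x v - ε)) y) ∧
  (∀ e u, ∀ ε : ℝ, 0 < ε →
    ¬ POrient G x (fun e' u' => if e' = e ∧ u' = u then y e u - ε else y e' u'))

/-- `x` is an extreme point of `P_WD(G)`: it is feasible and is not a proper convex
combination of two distinct points of `P_WD(G)`. -/
def PWDExtreme [Fintype V] (G : SimpleGraph V) (x : V → ℝ) : Prop :=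
  PWD G x ∧
    ∀ (x₁ x₂ : V → ℝ) (t : ℝ), PWD G x₁ → PWD G x₂ → 0 < t → t < 1 →
      (∀ v, x v = t * x₁ v + (1 - t) * x₂ v) → x₁ = x₂

/-- The support graph `H(y)`: the bipartite graph on `V(G) ⊕ E(G)` joining a vertex `v`
to an edge `e` whenever `v` is an endpoint of the edge `e` of `G` and `y e v > 0`. -/
def supportGraph [Fintype V] (G : SimpleGraph V) (y : Sym2 V → V → ℝ) :
    SimpleGraph (V ⊕ Sym2 V) :=
  SimpleGraph.fromRel fun a b =>
    ∃ v e, a = Sum.inl v ∧ b = Sum.inr e ∧ e ∈ G.edgeSet ∧ v ∈ e ∧ 0 < y e v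

/-- The edge `e` lies on some cycle of `G`. -/
def OnCycle (G : SimpleGraph V) (e : Sym2 V) : Prop :=
  ∃ (u : V) (w : G.Walk u u), w.IsCycle ∧ e ∈ w.edges

/-- `G` has a semi-disjoint cycle: a cycle containing at most one vertex whose degree
in `G` is strictly larger than `2`. -/
def HasSemiDisjointCycle [Fintype V] (G : SimpleGraph V) : Prop :=
  ∃ (u : V) (w : G.Walk u u), w.IsCycle ∧
    (w.support.toFinset.filter fun v => 2 < G.degree v).card ≤ 1

/-- The set `δ(F, V - F)` of edges of `G` with exactly one endpoint in `F`. -/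
def cutEdges [Fintype V] (G : SimpleGraph V) (F : Finset V) : Finset (Sym2 V) :=
  G.edgeFinset.filter fun e => ∃ u v, e = s(u, v) ∧ u ∈ F ∧ v ∉ F

/-- The function `f_x(S) = |E[S]| - |S| - Σ_{u ∈ S} (d_S(u) - 1) x_u`. -/
def fWD [Fintype V] (G : SimpleGraph V) (x : V → ℝ) (S : Finset V) : ℝ :=
  (edgesIn G S : ℝ) - S.card - ∑ u ∈ S, ((degIn G S u : ℝ) - 1) * x u

/-- The row vector `row(S)` of the weak density constraint for the set `S`:
its coordinate at `u` is `d_S(u) - 1` if `u ∈ S` and `0` otherwise. -/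
def rowWD [Fintype V] (G : SimpleGraph V) (S : Finset V) (u : V) : ℝ :=
  if u ∈ S then (degIn G S u : ℝ) - 1 else 0

/-- The constraints (orientation), (load), (cumulative) and nonnegativity of the
purely orientation-based ILP formulation for FVS, with one copy `y f` of the
orientation variables for each edge `f` of `G`:
* `x_v + x_w + y^f_{e,v} + y^f_{e,w} ≥ 1` for all edges `e = vw` and all `f ∈ E`;
* `x_v + Σ_{e = vw ∈ E} y^f_{e,w} ≥ 1` for all `v ∈ V` and all `f ∈ E`;
* `Σ_{v ∈ V - {a,b}} x_v + Σ_{e = vw ∈ E - {f}} (y^f_{e,w} + y^f_{e,v}) ≤ |V| - 2`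
  for all `f = ab ∈ E`; and all variables nonnegative. -/
def OrientSD [Fintype V] (G : SimpleGraph V) (x : V → ℝ)
    (y : Sym2 V → Sym2 V → V → ℝ) : Prop :=
  (∀ f ∈ G.edgeSet, ∀ v w, G.Adj v w →
    1 ≤ x v + x w + y f s(v, w) v + y f s(v, w) w) ∧
  (∀ f ∈ G.edgeSet, ∀ v : V, 1 ≤ x v + ∑ w ∈ G.neighborFinset v, y f s(v, w) w) ∧
  (∀ a b : V, G.Adj a b →
    (∑ v ∈ Finset.univ \ {a, b}, x v) +
      (∑ e ∈ G.edgeFinset.erase s(a, b),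
        ∑ u ∈ Finset.univ.filter (fun u => u ∈ e), y s(a, b) e u)
      ≤ (Fintype.card V : ℝ) - 2) ∧
  (∀ u, 0 ≤ x u) ∧ (∀ f e u, 0 ≤ y f e u)

end
end FVS

namespace FVS

noncomputable section Aux

variable {V : Type*} [Fintype V] (G : SimpleGraph V)

lemma degIn_mono {S T : Finset V} (h : S ⊆ T) (u : V) : degIn G S u ≤ degIn G T u :=
  Finset.card_le_card (Finset.filter_subset_filter _ h)

lemma degIn_union {A B : Finset V} (h : Disjoint A B) (u : V) :
    degIn G (A ∪ B) u = degIn G A u + degIn G B u := by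
  classical
  unfold degIn
  rw [Finset.filter_union, Finset.card_union_of_disjoint]
  exact Finset.disjoint_filter_filter h

lemma degIn_insert {S : Finset V} {v : V} (hv : v ∉ S) (u : V) :
    degIn G (insert v S) u = (if G.Adj u v then 1 else 0) + degIn G S u := by
  classical
  unfold degIn
  rw [Finset.filter_insert]
  split
  · rw [Finset.card_insert_of_notMem (fun hc => hv (Finset.mem_filter.1 hc).1)]; omega
  · rw [Nat.zero_add]

lemma degIn_self (S : Finset V) (u : V) : degIn G (S.erase u) u = degIn G S u := by
  classical
  unfold degIn
  congr 1
  ext v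
  simp only [Finset.mem_filter, Finset.mem_erase]
  constructor
  · rintro ⟨⟨_, hv⟩, ha⟩; exact ⟨hv, ha⟩
  · rintro ⟨hv, ha⟩; exact ⟨⟨fun hvu => G.irrefl (hvu ▸ ha), hv⟩, ha⟩

/-- The number of edges inside `S` through `u ∈ S` equals `degIn S u`. -/
lemma card_edges_through {S : Finset V} {u : V} (hu : u ∈ S) :
    ((G.edgeFinset.filter fun e => ∀ v ∈ e, v ∈ S).filter fun e => u ∈ e).card
      = degIn G S u := by
  classical
  unfold degIn
  refine (Finset.card_bij (fun v _ => s(u, v)) ?_ ?_ ?_).symm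
  · intro v hv
    rcases Finset.mem_filter.1 hv with ⟨hvS, hadj⟩
    simp only [Finset.mem_filter, SimpleGraph.mem_edgeFinset, SimpleGraph.mem_edgeSet]
    refine ⟨⟨hadj, ?_⟩, Sym2.mem_mk_left _ _⟩
    intro w hw
    rcases Sym2.mem_iff.1 hw with rfl | rfl
    · exact hu
    · exact hvS
  · intro a ha b hb hab
    exact (Sym2.congr_right).1 hab
  · intro e he
    rcases Finset.mem_filter.1 he with ⟨he1, heu⟩
    rcases Finset.mem_filter.1 he1 with ⟨heE, hend⟩
    induction e using Sym2.ind with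
    | _ a b =>
      have hadj : G.Adj a b := by simpa using heE
      rcases Sym2.mem_iff.1 heu with rfl | rfl
      · refine ⟨b, ?_, rfl⟩
        exact Finset.mem_filter.2 ⟨hend b (Sym2.mem_mk_right _ _), hadj⟩
      · refine ⟨a, ?_, Sym2.eq_swap⟩
        exact Finset.mem_filter.2 ⟨hend a (Sym2.mem_mk_left _ _), hadj.symm⟩

lemma edgesIn_insert {S : Finset V} {u : V} (hu : u ∉ S) :
    edgesIn G (insert u S) = edgesIn G S + degIn G S u := by
  classical
  unfold edgesIn
  rw [← Finset.card_filter_add_card_filter_not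
    (p := fun e => u ∈ e) (s := G.edgeFinset.filter fun e => ∀ v ∈ e, v ∈ insert u S)]
  have h1 : ((G.edgeFinset.filter fun e => ∀ v ∈ e, v ∈ insert u S).filter
      fun e => u ∈ e).card = degIn G S u := by
    rw [card_edges_through G (Finset.mem_insert_self u S)]
    have := degIn_insert G hu u
    simp only [G.irrefl, if_false] at this
    omega
  have h2 : ((G.edgeFinset.filter fun e => ∀ v ∈ e, v ∈ insert u S).filter
      fun e => ¬ u ∈ e) = (G.edgeFinset.filter fun e => ∀ v ∈ e, v ∈ S) := by
    ext e
    simp only [Finset.mem_filter, and_assoc]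
    constructor
    · rintro ⟨heE, hend, hne⟩
      refine ⟨heE, fun v hv => ?_⟩
      rcases Finset.mem_insert.1 (hend v hv) with rfl | h
      · exact absurd hv hne
      · exact h
    · rintro ⟨heE, hend⟩
      exact ⟨heE, fun v hv => Finset.mem_insert_of_mem (hend v hv),
        fun hue => hu (hend u hue)⟩
  rw [h1, h2]; omega

lemma edgesIn_empty : edgesIn G (∅ : Finset V) = 0 := by
  classical
  unfold edgesIn
  rw [Finset.card_eq_zero, Finset.filter_eq_empty_iff]
  intro e he
  induction e using Sym2.ind with
  | _ a b => exact fun h => absurd (h a (Sym2.mem_mk_left _ _)) (Finset.notMem_empty a)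

lemma edgesIn_union {A B : Finset V} (h : Disjoint A B) :
    edgesIn G (A ∪ B) = edgesIn G A + edgesIn G B + ∑ a ∈ A, degIn G B a := by
  classical
  induction A using Finset.induction_on with
  | empty => simp [edgesIn_empty]
  | @insert a A ha ih =>
    have hd : Disjoint A B := (Finset.disjoint_insert_left.1 h).2
    have haB : a ∉ B := (Finset.disjoint_insert_left.1 h).1
    have haAB : a ∉ A ∪ B := by simp [ha, haB]
    rw [Finset.insert_union, edgesIn_insert G haAB, ih hd,
      degIn_union G hd, Finset.sum_insert ha]
    have : edgesIn G (insert a A) = edgesIn G A + degIn G A a := edgesIn_insert G ha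
    omega

lemma edgesIn_mono {S T : Finset V} (h : S ⊆ T) : edgesIn G S ≤ edgesIn G T := by
  classical
  have : T = S ∪ (T \ S) := by rw [Finset.union_sdiff_of_subset h]
  rw [this, edgesIn_union G (Finset.disjoint_sdiff)]
  omega

lemma sum_degIn (S : Finset V) : ∑ u ∈ S, degIn G S u = 2 * edgesIn G S := by
  classical
  induction S using Finset.induction_on with
  | empty => simp [edgesIn_empty]
  | @insert v S hv ih =>
    rw [Finset.sum_insert hv, edgesIn_insert G hv]
    have h1 : degIn G (insert v S) v = degIn G S v := by
      rw [degIn_insert G hv v]; simp [G.irrefl]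
    have h3 : ∑ u ∈ S, (if G.Adj u v then 1 else 0) = degIn G S v := by
      rw [Finset.sum_boole]
      unfold degIn
      norm_cast
      congr 1
      ext u
      simp [G.adj_comm]
    have h2 : ∑ u ∈ S, degIn G (insert v S) u
        = degIn G S v + ∑ u ∈ S, degIn G S u := by
      rw [Finset.sum_congr rfl (fun u _ => degIn_insert G hv u),
        Finset.sum_add_distrib, h3]
    rw [h1, h2, ih]
    ring

lemma cross_symm (A B : Finset V) :
    ∑ a ∈ A, degIn G B a = ∑ b ∈ B, degIn G A b := by
  classical
  have h : ∀ (X Y : Finset V), ∑ a ∈ X, degIn G Y a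
      = ∑ a ∈ X, ∑ b ∈ Y, (if G.Adj a b then 1 else 0) := by
    intro X Y
    refine Finset.sum_congr rfl fun a _ => ?_
    unfold degIn
    rw [Finset.sum_boole]
    norm_cast
  rw [h, h, Finset.sum_comm]
  refine Finset.sum_congr rfl fun b _ => Finset.sum_congr rfl fun a _ => ?_
  simp [G.adj_comm]

lemma degIn_biUnion (𝒟 : Finset (Finset V))
    (hdis : ∀ C₁ ∈ 𝒟, ∀ C₂ ∈ 𝒟, C₁ ≠ C₂ → Disjoint C₁ C₂) (u : V) :
    degIn G (𝒟.biUnion id) u = ∑ C ∈ 𝒟, degIn G C u := by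
  classical
  induction 𝒟 using Finset.induction_on with
  | empty => simp [degIn]
  | @insert C 𝒟 hC ih =>
    rw [Finset.biUnion_insert, Finset.sum_insert hC]
    simp only [id]
    have hdisj : Disjoint C (𝒟.biUnion id) := by
      rw [Finset.disjoint_biUnion_right]
      intro D hD
      exact hdis C (Finset.mem_insert_self _ _) D (Finset.mem_insert_of_mem hD)
        (fun h => hC (h ▸ hD))
    rw [degIn_union G hdisj, ih (fun C₁ h₁ C₂ h₂ hne =>
      hdis C₁ (Finset.mem_insert_of_mem h₁) C₂ (Finset.mem_insert_of_mem h₂) hne)]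

lemma edgesIn_biUnion (𝒟 : Finset (Finset V))
    (hdis : ∀ C₁ ∈ 𝒟, ∀ C₂ ∈ 𝒟, C₁ ≠ C₂ → Disjoint C₁ C₂)
    (hadj : ∀ C₁ ∈ 𝒟, ∀ C₂ ∈ 𝒟, C₁ ≠ C₂ → ∀ a ∈ C₁, ∀ b ∈ C₂, ¬ G.Adj a b) :
    edgesIn G (𝒟.biUnion id) = ∑ C ∈ 𝒟, edgesIn G C := by
  classical
  induction 𝒟 using Finset.induction_on with
  | empty => simp [edgesIn_empty]
  | @insert C 𝒟 hC ih =>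
    rw [Finset.biUnion_insert, Finset.sum_insert hC]
    simp only [id]
    have hdisj : Disjoint C (𝒟.biUnion id) := by
      rw [Finset.disjoint_biUnion_right]
      intro D hD
      exact hdis C (Finset.mem_insert_self _ _) D (Finset.mem_insert_of_mem hD)
        (fun h => hC (h ▸ hD))
    rw [edgesIn_union G hdisj, ih
      (fun C₁ h₁ C₂ h₂ hne => hdis C₁ (Finset.mem_insert_of_mem h₁) C₂
        (Finset.mem_insert_of_mem h₂) hne)
      (fun C₁ h₁ C₂ h₂ hne => hadj C₁ (Finset.mem_insert_of_mem h₁) C₂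
        (Finset.mem_insert_of_mem h₂) hne)]
    have hz : ∀ a ∈ C, degIn G (𝒟.biUnion id) a = 0 := by
      intro a ha
      unfold degIn
      rw [Finset.card_eq_zero, Finset.filter_eq_empty_iff]
      intro b hb
      rcases Finset.mem_biUnion.1 hb with ⟨D, hD, hbD⟩
      refine hadj C (Finset.mem_insert_self _ _) D (Finset.mem_insert_of_mem hD)
        (fun h => hC (h ▸ hD)) a ha b hbD
    rw [Finset.sum_congr rfl hz]
    simp

set_option linter.unusedSectionVars false

section Comps

def stepRel (P : Finset V) (a b : V) : Prop := a ∈ P ∧ b ∈ P ∧ G.Adj a b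

def reachIn (P : Finset V) : V → V → Prop := Relation.ReflTransGen (stepRel G P)

def comp (P : Finset V) (a : V) : Finset V := P.filter (reachIn G P a)

def comps (P : Finset V) : Finset (Finset V) := P.image (comp G P)

variable {G}

lemma reachIn_symm {P : Finset V} {a b : V} (h : reachIn G P a b) : reachIn G P b a := by
  induction h with
  | refl => exact Relation.ReflTransGen.refl
  | tail _ hstep ih =>
    rcases hstep with ⟨h1, h2, h3⟩
    exact Relation.ReflTransGen.trans (Relation.ReflTransGen.single ⟨h2, h1, h3.symm⟩) ih

lemma reachIn_trans {P : Finset V} {a b c : V} (h : reachIn G P a b)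
    (h' : reachIn G P b c) : reachIn G P a c := Relation.ReflTransGen.trans h h'

lemma reachIn_mono {P Q : Finset V} (hPQ : P ⊆ Q) {a b : V} (h : reachIn G P a b) :
    reachIn G Q a b :=
  Relation.ReflTransGen.mono (r := stepRel G P) (p := stepRel G Q)
    (fun _ _ ⟨h1, h2, h3⟩ => ⟨hPQ h1, hPQ h2, h3⟩) a b h

lemma mem_comp_self {P : Finset V} {a : V} (ha : a ∈ P) : a ∈ comp G P a :=
  Finset.mem_filter.2 ⟨ha, Relation.ReflTransGen.refl⟩

lemma comp_subset {P : Finset V} {a : V} : comp G P a ⊆ P := Finset.filter_subset _ _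

lemma mem_comp {P : Finset V} {a b : V} : b ∈ comp G P a ↔ b ∈ P ∧ reachIn G P a b :=
  Finset.mem_filter

lemma comp_eq_of_mem {P : Finset V} {a b : V} (h : b ∈ comp G P a) :
    comp G P b = comp G P a := by
  rcases mem_comp.1 h with ⟨hbP, hab⟩
  ext c
  simp only [mem_comp]
  exact ⟨fun ⟨hc, hbc⟩ => ⟨hc, reachIn_trans hab hbc⟩,
    fun ⟨hc, hac⟩ => ⟨hc, reachIn_trans (reachIn_symm hab) hac⟩⟩

lemma comp_mem_comps {P : Finset V} {a : V} (ha : a ∈ P) : comp G P a ∈ comps G P :=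
  Finset.mem_image_of_mem _ ha

lemma comps_eq_comp {P C : Finset V} (hC : C ∈ comps G P) {a : V} (ha : a ∈ C) :
    comp G P a = C := by
  rcases Finset.mem_image.1 hC with ⟨b, _, rfl⟩
  exact comp_eq_of_mem ha

lemma comps_nonempty {P C : Finset V} (hC : C ∈ comps G P) : C.Nonempty := by
  rcases Finset.mem_image.1 hC with ⟨b, hb, rfl⟩
  exact ⟨b, mem_comp_self hb⟩

lemma comps_subset {P C : Finset V} (hC : C ∈ comps G P) : C ⊆ P := by
  rcases Finset.mem_image.1 hC with ⟨b, _, rfl⟩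
  exact comp_subset

lemma comps_disjoint {P C₁ C₂ : Finset V} (h₁ : C₁ ∈ comps G P) (h₂ : C₂ ∈ comps G P)
    (hne : C₁ ≠ C₂) : Disjoint C₁ C₂ := by
  rw [Finset.disjoint_left]
  intro x hx1 hx2
  exact hne ((comps_eq_comp h₁ hx1).symm.trans (comps_eq_comp h₂ hx2))

lemma comps_no_adj {P C₁ C₂ : Finset V} (h₁ : C₁ ∈ comps G P) (h₂ : C₂ ∈ comps G P)
    (hne : C₁ ≠ C₂) {a b : V} (ha : a ∈ C₁) (hb : b ∈ C₂) : ¬ G.Adj a b := by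
  intro hadj
  have hstep : reachIn G P a b :=
    Relation.ReflTransGen.single ⟨comps_subset h₁ ha, comps_subset h₂ hb, hadj⟩
  have : b ∈ comp G P a := mem_comp.2 ⟨comps_subset h₂ hb, hstep⟩
  rw [comps_eq_comp h₁ ha] at this
  exact (Finset.disjoint_left.1 (comps_disjoint h₁ h₂ hne) this) hb

lemma comps_biUnion (P : Finset V) : (comps G P).biUnion id = P := by
  ext x
  simp only [Finset.mem_biUnion, id]
  constructor
  · rintro ⟨C, hC, hx⟩; exact comps_subset hC hx
  · intro hx; exact ⟨comp G P x, comp_mem_comps hx, mem_comp_self hx⟩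

lemma sum_card_comps (P : Finset V) : ∑ C ∈ comps G P, C.card = P.card := by
  classical
  conv_rhs => rw [← comps_biUnion (G := G) P]
  exact (Finset.card_biUnion (fun C₁ h₁ C₂ h₂ hne => comps_disjoint h₁ h₂ hne)).symm

lemma sum_edgesIn_comps (P : Finset V) :
    ∑ C ∈ comps G P, edgesIn G C = edgesIn G P := by
  classical
  rw [← edgesIn_biUnion G (comps G P)
    (fun C₁ h₁ C₂ h₂ hne => comps_disjoint h₁ h₂ hne)
    (fun C₁ h₁ C₂ h₂ hne a ha b hb => comps_no_adj h₁ h₂ hne ha hb),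
    comps_biUnion]

lemma reach_closed {P T : Finset V} (hT : ∀ x ∈ T, ∀ y, stepRel G P x y → y ∈ T)
    {a b : V} (ha : a ∈ T) (h : reachIn G P a b) : b ∈ T := by
  induction h with
  | refl => exact ha
  | tail _ hstep ih => exact hT _ ih _ hstep

lemma reachIn_comp {P : Finset V} {a b : V} (ha : a ∈ P) (h : reachIn G P a b) :
    reachIn G (comp G P a) a b := by
  induction h with
  | refl => exact .refl
  | @tail x y hax hstep ih =>
    rcases hstep with ⟨hxP, hyP, hadj⟩
    have hx : x ∈ comp G P a := mem_comp.2 ⟨hxP, hax⟩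
    have hy : y ∈ comp G P a := mem_comp.2 ⟨hyP, hax.tail ⟨hxP, hyP, hadj⟩⟩
    exact ih.tail ⟨hx, hy, hadj⟩

lemma comps_connected {P C : Finset V} (hC : C ∈ comps G P) {a b : V}
    (ha : a ∈ C) (hb : b ∈ C) : reachIn G C a b := by
  have haP := comps_subset hC ha
  have h1 : b ∈ comp G P a := by rw [comps_eq_comp hC ha]; exact hb
  have h2 := reachIn_comp haP (mem_comp.1 h1).2
  rwa [comps_eq_comp hC ha] at h2

lemma comps_card_of_mem {P C : Finset V} (hC : C ∈ comps G P) :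
    (comps G C).card = 1 := by
  classical
  have hconst : ∀ b ∈ C, comp G C b = C := by
    intro b hb
    refine Finset.Subset.antisymm comp_subset (fun c hc => ?_)
    exact mem_comp.2 ⟨hc, comps_connected hC hb hc⟩
  have : comps G C = {C} := by
    unfold comps
    rw [Finset.image_congr (fun b hb => hconst b hb)]
    exact Finset.image_const (comps_nonempty hC) C
  rw [this, Finset.card_singleton]

lemma comps_card_pos {P : Finset V} (hP : P.Nonempty) : 1 ≤ (comps G P).card := by
  obtain ⟨a, ha⟩ := hP
  exact Finset.card_pos.2 ⟨comp G P a, comp_mem_comps ha⟩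

lemma comps_insert_bound {P : Finset V} {v : V} (hv : v ∉ P) :
    (comps G P).card + 1 ≤ (comps G (insert v P)).card + degIn G P v := by
  classical
  set Q := insert v P with hQ
  set D := comp G Q v with hD
  have hvQ : v ∈ Q := Finset.mem_insert_self _ _
  have hclosed : ∀ C ∈ comps G P, (∀ w ∈ C, ¬ G.Adj v w) →
      (∀ x ∈ C, ∀ y, stepRel G Q x y → y ∈ C) := by
    intro C hC hnoadj x hx y hstep
    rcases hstep with ⟨hxQ, hyQ, hadj⟩
    rcases Finset.mem_insert.1 hyQ with rfl | hyP
    · exact absurd hadj.symm (hnoadj x hx)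
    · have hxP : x ∈ P := comps_subset hC hx
      have h2 : y ∈ comp G P x :=
        mem_comp.2 ⟨hyP, Relation.ReflTransGen.single ⟨hxP, hyP, hadj⟩⟩
      rw [comps_eq_comp hC hx] at h2; exact h2
  have hexists_nbr : ∀ C ∈ comps G P, C ⊆ D → ∃ w ∈ C, G.Adj v w := by
    intro C hC hCD
    by_contra hno
    push_neg at hno
    obtain ⟨a, haC⟩ := comps_nonempty hC
    have hva : reachIn G Q v a := (mem_comp.1 (hCD haC)).2
    have : v ∈ C := reach_closed (hclosed C hC hno) haC (reachIn_symm hva)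
    exact hv (comps_subset hC this)
  have hB_mem : ∀ C ∈ comps G P, ¬ C ⊆ D → C ∈ (comps G Q).erase D := by
    intro C hC hnCD
    have hno : ∀ w ∈ C, ¬ G.Adj v w := by
      intro w hw hadj
      apply hnCD
      intro c hc
      have hwQ : w ∈ Q := Finset.mem_insert_of_mem (comps_subset hC hw)
      have hvw : reachIn G Q v w := Relation.ReflTransGen.single ⟨hvQ, hwQ, hadj⟩
      have hc' : c ∈ comp G P w := by rw [comps_eq_comp hC hw]; exact hc
      exact mem_comp.2 ⟨Finset.mem_insert_of_mem (comps_subset hC hc),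
        reachIn_trans hvw (reachIn_mono (Finset.subset_insert v P) (mem_comp.1 hc').2)⟩
    obtain ⟨a, haC⟩ := comps_nonempty hC
    have hCQ : C = comp G Q a := by
      refine Finset.Subset.antisymm (fun c hc => ?_) (fun c hc => ?_)
      · have hc' : c ∈ comp G P a := by rw [comps_eq_comp hC haC]; exact hc
        exact mem_comp.2 ⟨Finset.mem_insert_of_mem (comps_subset hC hc),
          reachIn_mono (Finset.subset_insert v P) (mem_comp.1 hc').2⟩
      · exact reach_closed (hclosed C hC hno) haC (mem_comp.1 hc).2
    refine Finset.mem_erase.2 ⟨?_, ?_⟩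
    · intro hCD
      exact hv (comps_subset hC (hCD ▸ mem_comp_self hvQ))
    · rw [hCQ]
      exact comp_mem_comps (Finset.mem_insert_of_mem (comps_subset hC haC))
  set A := (comps G P).filter (fun C => C ⊆ D) with hA
  set B := (comps G P).filter (fun C => ¬ C ⊆ D) with hB
  have hsplit : A.card + B.card = (comps G P).card :=
    Finset.card_filter_add_card_filter_not _
  have hDQ : D ∈ comps G Q := comp_mem_comps hvQ
  have hBcard : B.card + 1 ≤ (comps G Q).card := by
    have h1 : B ⊆ (comps G Q).erase D := by
      intro C hC
      rcases Finset.mem_filter.1 hC with ⟨h2, h3⟩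
      exact hB_mem C h2 h3
    have h2 := Finset.card_le_card h1
    have h3 := Finset.card_erase_of_mem hDQ
    have h4 := Finset.card_pos.2 ⟨D, hDQ⟩
    omega
  have hAcard : A.card ≤ degIn G P v := by
    unfold degIn
    set g : Finset V → V := fun C => if h : ∃ w ∈ C, G.Adj v w then h.choose else v with hg
    have hgspec : ∀ C ∈ A, g C ∈ C ∧ G.Adj v (g C) := by
      intro C hC
      rcases Finset.mem_filter.1 hC with ⟨h2, h3⟩
      have hex := hexists_nbr C h2 h3
      rw [hg]
      simp only [dif_pos hex]
      exact ⟨hex.choose_spec.1, hex.choose_spec.2⟩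
    refine Finset.card_le_card_of_injOn g ?_ ?_
    · intro C hC
      rcases Finset.mem_filter.1 hC with ⟨h2, _⟩
      exact Finset.mem_filter.2 ⟨comps_subset h2 (hgspec C hC).1, (hgspec C hC).2⟩
    · intro C₁ h₁ C₂ h₂ heq
      rcases Finset.mem_filter.1 h₁ with ⟨h₁', _⟩
      rcases Finset.mem_filter.1 h₂ with ⟨h₂', _⟩
      rw [← comps_eq_comp h₁' (hgspec C₁ h₁).1, ← comps_eq_comp h₂' (hgspec C₂ h₂).1, heq]
  omega

lemma card_le_edgesIn_add_comps (P : Finset V) :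
    P.card ≤ edgesIn G P + (comps G P).card := by
  classical
  induction P using Finset.induction_on with
  | empty => simp
  | @insert v P hv ih =>
    have h8 := comps_insert_bound (G := G) hv
    have h6 := edgesIn_insert G hv
    have h5 := Finset.card_insert_of_notMem hv
    omega

lemma comps_edge_lb {P C : Finset V} (hC : C ∈ comps G P) :
    C.card ≤ edgesIn G C + 1 := by
  have h1 := card_le_edgesIn_add_comps (G := G) C
  rw [comps_card_of_mem hC] at h1
  exact h1

lemma tree_subset_bound {P C : Finset V} (hC : C ∈ comps G P)
    (htree : edgesIn G C + 1 = C.card) {S : Finset V} (hS : S ⊆ C) (hne : S.Nonempty) :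
    edgesIn G S + 1 ≤ S.card := by
  classical
  suffices h : ∀ n (S : Finset V), S ⊆ C → (C \ S).card ≤ n →
      edgesIn G S + (comps G S).card ≤ S.card by
    have h1 := h (C \ S).card S hS le_rfl
    have h2 := comps_card_pos (G := G) hne
    omega
  intro n
  induction n with
  | zero =>
    intro S hS hcard
    have : S = C := by
      have : C \ S = ∅ := Finset.card_eq_zero.1 (Nat.le_zero.1 hcard)
      have hCS : C ⊆ S := by
        intro c hc
        by_contra hcS
        exact (Finset.notMem_empty c) (this ▸ Finset.mem_sdiff.2 ⟨hc, hcS⟩)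
      exact Finset.Subset.antisymm hS hCS
    subst this
    rw [comps_card_of_mem hC]
    omega
  | succ n ih =>
    intro S hS hcard
    by_cases hSC : S = C
    · subst hSC
      rw [comps_card_of_mem hC]
      omega
    · have hne' : (C \ S).Nonempty := by
        rw [Finset.sdiff_nonempty]
        intro h
        exact hSC (Finset.Subset.antisymm hS h)
      obtain ⟨v, hv⟩ := hne'
      rcases Finset.mem_sdiff.1 hv with ⟨hvC, hvS⟩
      have hsub : insert v S ⊆ C := Finset.insert_subset hvC hS
      have hcard' : (C \ insert v S).card ≤ n := by
        have h1 : C \ insert v S = (C \ S).erase v := by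
          ext x
          simp only [Finset.mem_sdiff, Finset.mem_erase, Finset.mem_insert]
          tauto
        have h2 := Finset.card_erase_of_mem hv
        rw [h1]
        omega
      have hih := ih (insert v S) hsub hcard'
      have h6 := edgesIn_insert G hvS
      have h8 := comps_insert_bound (G := G) hvS
      have h5 := Finset.card_insert_of_notMem hvS
      omega

end Comps

lemma edgesIn_biUnion_f (𝒟 : Finset (Finset V)) (f : Finset V → Finset V)
    (hf : ∀ C ∈ 𝒟, f C ⊆ C)
    (hdis : ∀ C₁ ∈ 𝒟, ∀ C₂ ∈ 𝒟, C₁ ≠ C₂ → Disjoint C₁ C₂)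
    (hadj : ∀ C₁ ∈ 𝒟, ∀ C₂ ∈ 𝒟, C₁ ≠ C₂ → ∀ a ∈ C₁, ∀ b ∈ C₂, ¬ G.Adj a b) :
    edgesIn G (𝒟.biUnion f) = ∑ C ∈ 𝒟, edgesIn G (f C) := by
  classical
  induction 𝒟 using Finset.induction_on with
  | empty => simp [edgesIn_empty]
  | @insert C 𝒟 hC ih =>
    rw [Finset.biUnion_insert, Finset.sum_insert hC]
    have hCm := Finset.mem_insert_self C 𝒟
    have hdisj : Disjoint (f C) (𝒟.biUnion f) := by
      rw [Finset.disjoint_biUnion_right]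
      intro D hD
      exact Finset.disjoint_of_subset_left (hf C hCm)
        (Finset.disjoint_of_subset_right (hf D (Finset.mem_insert_of_mem hD))
          (hdis C hCm D (Finset.mem_insert_of_mem hD) (fun h => hC (h ▸ hD))))
    rw [edgesIn_union G hdisj, ih
      (fun D hD => hf D (Finset.mem_insert_of_mem hD))
      (fun C₁ h₁ C₂ h₂ hne => hdis C₁ (Finset.mem_insert_of_mem h₁) C₂
        (Finset.mem_insert_of_mem h₂) hne)
      (fun C₁ h₁ C₂ h₂ hne => hadj C₁ (Finset.mem_insert_of_mem h₁) C₂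
        (Finset.mem_insert_of_mem h₂) hne)]
    have hz : ∀ a ∈ f C, degIn G (𝒟.biUnion f) a = 0 := by
      intro a ha
      unfold degIn
      rw [Finset.card_eq_zero, Finset.filter_eq_empty_iff]
      intro b hb hadj2
      rcases Finset.mem_biUnion.1 hb with ⟨D, hD, hbD⟩
      exact hadj C hCm D (Finset.mem_insert_of_mem hD)
        (fun h => hC (h ▸ hD)) a (hf C hCm ha) b (hf D (Finset.mem_insert_of_mem hD) hbD) hadj2
    rw [Finset.sum_congr rfl hz]
    simp

lemma lemmaA {U W : Finset V} (hdisj : Disjoint U W)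
    (hnd : ∀ S ⊆ W, edgesIn G S ≤ S.card)
    (hmin : ∀ u ∈ U, ∃ S, S ⊆ insert u W ∧ S.card + 1 ≤ edgesIn G S)
    (hdeg : ∀ v ∈ U ∪ W, 2 ≤ degIn G (U ∪ W) v) :
    ∑ u ∈ U, degIn G (U ∪ W) u + 3 * (U ∪ W).card ≤ 3 * edgesIn G (U ∪ W) + U.card := by
  classical
  set R := U ∪ W with hR
  set 𝒞 := comps G W with h𝒞
  set 𝒯 := 𝒞.filter (fun C => edgesIn G C + 1 = C.card) with h𝒯
  have hdegsplit : ∀ v, degIn G R v = degIn G U v + degIn G W v :=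
    fun v => degIn_union G hdisj v
  have heq1 : ∑ u ∈ U, degIn G R u = 2 * edgesIn G U + ∑ u ∈ U, degIn G W u := by
    rw [Finset.sum_congr rfl (fun u _ => hdegsplit u), Finset.sum_add_distrib, sum_degIn]
  have heq2 : edgesIn G R = edgesIn G U + edgesIn G W + ∑ u ∈ U, degIn G W u :=
    edgesIn_union G hdisj
  have hcardR : R.card = U.card + W.card := Finset.card_union_of_disjoint hdisj
  have hi : 2 * W.card ≤ 2 * edgesIn G W + ∑ u ∈ U, degIn G W u := by
    have h2 : 2 * W.card ≤ ∑ w ∈ W, degIn G R w := by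
      calc 2 * W.card = ∑ _w ∈ W, 2 := by rw [Finset.sum_const]; ring
      _ ≤ _ := Finset.sum_le_sum (fun w hw => hdeg w (Finset.mem_union_right _ hw))
    rw [Finset.sum_congr rfl (fun w _ => hdegsplit w), Finset.sum_add_distrib, sum_degIn,
      cross_symm G W U] at h2
    omega
  have hWnoadj : ∀ C ∈ 𝒞, ∀ w ∈ C, degIn G (W \ C) w = 0 := by
    intro C hC w hw
    unfold degIn
    rw [Finset.card_eq_zero, Finset.filter_eq_empty_iff]
    intro b hb hadj
    rcases Finset.mem_sdiff.1 hb with ⟨hbW, hbC⟩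
    have hmem : b ∈ comp G W w := mem_comp.2 ⟨hbW,
      Relation.ReflTransGen.single ⟨comps_subset hC hw, hbW, hadj⟩⟩
    rw [comps_eq_comp hC hw] at hmem
    exact hbC hmem
  have hWdeg : ∀ C ∈ 𝒞, ∀ w ∈ C, degIn G W w = degIn G C w := by
    intro C hC w hw
    have hCW : C ⊆ W := comps_subset hC
    have hWu : W = C ∪ (W \ C) := (Finset.union_sdiff_of_subset hCW).symm
    rw [hWu, degIn_union G Finset.disjoint_sdiff, hWnoadj C hC w hw]
    omega
  have hcover : ∀ C ∈ 𝒯, ∃ u ∈ U, 1 ≤ degIn G C u := by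
    intro C hCT
    rcases Finset.mem_filter.1 hCT with ⟨hC, htree⟩
    have hCW : C ⊆ W := comps_subset hC
    have hsum : ∑ w ∈ C, degIn G R w = ∑ w ∈ C, degIn G U w + 2 * edgesIn G C := by
      rw [Finset.sum_congr rfl (fun w _ => hdegsplit w), Finset.sum_add_distrib,
        Finset.sum_congr rfl (fun w hw => hWdeg C hC w hw), sum_degIn]
    have hlb : 2 * C.card ≤ ∑ w ∈ C, degIn G R w := by
      calc 2 * C.card = ∑ _w ∈ C, 2 := by rw [Finset.sum_const]; ring
      _ ≤ _ := Finset.sum_le_sum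
        (fun w hw => hdeg w (Finset.mem_union_right _ (hCW hw)))
    have h2 : 1 ≤ ∑ w ∈ C, degIn G U w := by omega
    have h3 : ∃ w ∈ C, 1 ≤ degIn G U w := by
      by_contra h
      push_neg at h
      have : ∑ w ∈ C, degIn G U w = 0 :=
        Finset.sum_eq_zero (fun w hw => by have := h w hw; omega)
      omega
    obtain ⟨w, hwC, hw1⟩ := h3
    have h4 : (U.filter (fun u => G.Adj w u)).Nonempty := by
      rw [← Finset.card_pos]
      exact hw1
    obtain ⟨u, hu⟩ := h4
    rcases Finset.mem_filter.1 hu with ⟨huU, hadj⟩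
    refine ⟨u, huU, ?_⟩
    have : w ∈ C.filter (fun v => G.Adj u v) := Finset.mem_filter.2 ⟨hwC, hadj.symm⟩
    exact Finset.card_pos.2 ⟨w, this⟩
  set t : V → ℕ := fun u => (𝒯.filter (fun C => 1 ≤ degIn G C u)).card with ht
  have hcover2 : 𝒯.card ≤ ∑ u ∈ U, t u := by
    have h1 : ∀ C ∈ 𝒯, (1:ℕ) ≤ ∑ u ∈ U, (if 1 ≤ degIn G C u then 1 else 0) := by
      intro C hC
      obtain ⟨u, huU, hu1⟩ := hcover C hC
      calc (1:ℕ) = if 1 ≤ degIn G C u then 1 else 0 := by rw [if_pos hu1]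
      _ ≤ _ := Finset.single_le_sum (f := fun u => if 1 ≤ degIn G C u then (1:ℕ) else 0)
          (fun _ _ => by positivity) huU
    calc 𝒯.card = ∑ C ∈ 𝒯, 1 := by rw [Finset.sum_const]; ring
    _ ≤ ∑ C ∈ 𝒯, ∑ u ∈ U, (if 1 ≤ degIn G C u then 1 else 0) := Finset.sum_le_sum h1
    _ = ∑ u ∈ U, ∑ C ∈ 𝒯, (if 1 ≤ degIn G C u then 1 else 0) := Finset.sum_comm
    _ = ∑ u ∈ U, t u := by
        refine Finset.sum_congr rfl (fun u _ => ?_)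
        rw [ht]
        exact (Finset.card_filter _ _).symm
  have hperu : ∀ u ∈ U, t u + 2 ≤ degIn G W u := by
    intro u huU
    obtain ⟨S, hSsub, hSdense⟩ := hmin u huU
    have huW : u ∉ W := Finset.disjoint_left.1 hdisj huU
    have huS : u ∈ S := by
      by_contra huS
      have hSW : S ⊆ W := by
        intro x hx
        rcases Finset.mem_insert.1 (hSsub hx) with rfl | h
        · exact absurd hx huS
        · exact h
      have := hnd S hSW
      omega
    set S' := S.erase u with hS'def
    have hS'W : S' ⊆ W := by
      intro x hx
      rcases Finset.mem_erase.1 hx with ⟨hne, hxS⟩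
      rcases Finset.mem_insert.1 (hSsub hxS) with rfl | h
      · exact absurd rfl hne
      · exact h
    have huS' : u ∉ S' := Finset.notMem_erase u S
    have hins : S = insert u S' := (Finset.insert_erase huS).symm
    have hScard : S.card = S'.card + 1 := by
      rw [hins, Finset.card_insert_of_notMem huS']
    have heS : edgesIn G S = edgesIn G S' + degIn G S' u := by
      rw [hins, edgesIn_insert G huS']
    have hbi : 𝒞.biUnion (fun C => S' ∩ C) = S' := by
      ext x
      simp only [Finset.mem_biUnion, Finset.mem_inter]
      constructor
      · rintro ⟨C, _, hx1, _⟩; exact hx1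
      · intro hx
        exact ⟨comp G W x, comp_mem_comps (hS'W hx), hx, mem_comp_self (hS'W hx)⟩
    have hpieces : edgesIn G S' = ∑ C ∈ 𝒞, edgesIn G (S' ∩ C) := by
      rw [← hbi, edgesIn_biUnion_f G 𝒞 (fun C => S' ∩ C)
        (fun C _ => Finset.inter_subset_right)
        (fun C₁ h₁ C₂ h₂ hne => comps_disjoint h₁ h₂ hne)
        (fun C₁ h₁ C₂ h₂ hne a ha b hb => comps_no_adj h₁ h₂ hne ha hb), hbi]
    set k := (𝒯.filter (fun C => (S' ∩ C).Nonempty)).card with hkdef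
    have hcardS' : ∑ C ∈ 𝒞, (S' ∩ C).card = S'.card := by
      rw [← hbi, Finset.card_biUnion]
      · rw [hbi]
      · intro C₁ h₁ C₂ h₂ hne
        exact Finset.disjoint_of_subset_left Finset.inter_subset_right
          (Finset.disjoint_of_subset_right Finset.inter_subset_right
            (comps_disjoint h₁ h₂ hne))
    have hksum : k = ∑ C ∈ 𝒞, (if (edgesIn G C + 1 = C.card) ∧ (S' ∩ C).Nonempty
        then 1 else 0) := by
      rw [hkdef, h𝒯, Finset.filter_filter]
      exact Finset.card_filter _ _
    have hper : ∀ C ∈ 𝒞, edgesIn G (S' ∩ C) +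
        (if (edgesIn G C + 1 = C.card) ∧ (S' ∩ C).Nonempty then 1 else 0)
        ≤ (S' ∩ C).card := by
      intro C hC
      split
      · next h =>
        exact tree_subset_bound hC h.1 Finset.inter_subset_right h.2
      · have := hnd (S' ∩ C) (fun x hx => hS'W (Finset.mem_inter.1 hx).1)
        omega
    have hsum_piece : edgesIn G S' + k ≤ S'.card := by
      rw [hpieces, hksum, ← hcardS', ← Finset.sum_add_distrib]
      exact Finset.sum_le_sum hper
    have hdegS' : k + 2 ≤ degIn G S' u := by omega
    set M := 𝒯.filter (fun C => 1 ≤ degIn G C u ∧ S' ∩ C = ∅) with hMdef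
    have hMT : M ⊆ 𝒞 := fun C hC =>
      Finset.mem_of_mem_filter C (Finset.filter_subset _ _ hC)
    have hMdisj : ∀ C₁ ∈ M, ∀ C₂ ∈ M, C₁ ≠ C₂ → Disjoint C₁ C₂ :=
      fun C₁ h₁ C₂ h₂ hne => comps_disjoint (hMT h₁) (hMT h₂) hne
    have hdegW : degIn G S' u + M.card ≤ degIn G W u := by
      have hdisj2 : Disjoint S' (M.biUnion id) := by
        rw [Finset.disjoint_biUnion_right]
        intro C hC
        rcases Finset.mem_filter.1 hC with ⟨_, _, hSC⟩
        rw [Finset.disjoint_iff_inter_eq_empty]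
        exact hSC
      have hsub2 : S' ∪ M.biUnion id ⊆ W := by
        apply Finset.union_subset hS'W
        intro x hx
        rcases Finset.mem_biUnion.1 hx with ⟨C, hC, hxC⟩
        exact comps_subset (hMT hC) hxC
      have hMsum : M.card ≤ ∑ C ∈ M, degIn G C u := by
        calc M.card = ∑ _C ∈ M, 1 := by rw [Finset.sum_const]; ring
        _ ≤ _ := Finset.sum_le_sum (fun C hC => (Finset.mem_filter.1 hC).2.1)
      calc degIn G S' u + M.card ≤ degIn G S' u + ∑ C ∈ M, degIn G C u := by omega
      _ = degIn G (S' ∪ M.biUnion id) u := by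
          rw [degIn_union G hdisj2, degIn_biUnion G M hMdisj u]
      _ ≤ degIn G W u := degIn_mono G hsub2 u
    have htu : t u ≤ k + M.card := by
      rw [ht]
      have hsubt : 𝒯.filter (fun C => 1 ≤ degIn G C u) ⊆
          (𝒯.filter (fun C => (S' ∩ C).Nonempty)) ∪ M := by
        intro C hC
        rcases Finset.mem_filter.1 hC with ⟨hCT, hdeg1⟩
        by_cases hne : (S' ∩ C).Nonempty
        · exact Finset.mem_union_left _ (Finset.mem_filter.2 ⟨hCT, hne⟩)
        · refine Finset.mem_union_right _ (Finset.mem_filter.2 ⟨hCT, hdeg1, ?_⟩)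
          exact Finset.not_nonempty_iff_eq_empty.1 hne
      calc (𝒯.filter (fun C => 1 ≤ degIn G C u)).card
          ≤ ((𝒯.filter (fun C => (S' ∩ C).Nonempty)) ∪ M).card := Finset.card_le_card hsubt
      _ ≤ k + M.card := Finset.card_union_le _ _
    omega
  have hii : 2 * U.card + 𝒯.card ≤ ∑ u ∈ U, degIn G W u := by
    have h1 : ∑ u ∈ U, (t u + 2) ≤ ∑ u ∈ U, degIn G W u := Finset.sum_le_sum hperu
    rw [Finset.sum_add_distrib, Finset.sum_const] at h1
    have := hcover2
    simp only [smul_eq_mul] at h1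
    omega
  have hiii : W.card ≤ edgesIn G W + 𝒯.card := by
    have h1 : ∀ C ∈ 𝒞, C.card ≤ edgesIn G C +
        (if edgesIn G C + 1 = C.card then 1 else 0) := by
      intro C hC
      split
      · omega
      · next h =>
        have h2 := hnd C (comps_subset hC)
        have h3 := comps_edge_lb hC
        omega
    have h4 : 𝒯.card = ∑ C ∈ 𝒞, (if edgesIn G C + 1 = C.card then 1 else 0) := by
      rw [h𝒯]
      exact Finset.card_filter _ _
    calc W.card = ∑ C ∈ 𝒞, C.card := (sum_card_comps W).symm
    _ ≤ ∑ C ∈ 𝒞, (edgesIn G C + (if edgesIn G C + 1 = C.card then 1 else 0)) :=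
        Finset.sum_le_sum h1
    _ = edgesIn G W + 𝒯.card := by
        rw [Finset.sum_add_distrib, sum_edgesIn_comps, ← h4]
  omega

lemma mainLemma : ∀ n : ℕ, ∀ c : V → ℝ, ∀ R : Finset V,
    R.card + (R.filter fun u => c u ≠ 0).card ≤ n → (∀ u, 0 ≤ c u) →
    ∀ x : V → ℝ, (∀ u, 0 ≤ x u) →
    (∀ S : Finset V, (edgesIn G S : ℝ) - S.card ≤ ∑ u ∈ S, ((degIn G S u : ℝ) - 1) * x u) →
    ∃ U, U ⊆ R ∧ (∀ S ⊆ R \ U, edgesIn G S ≤ S.card) ∧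
      ∑ u ∈ U, c u ≤ 3 * ∑ u ∈ R, c u * x u := by
  classical
  intro n
  induction n with
  | zero =>
    intro c R hn hc x hx hLP
    have hR : R = ∅ := Finset.card_eq_zero.1 (by omega)
    subst hR
    refine ⟨∅, Finset.Subset.refl _, ?_, ?_⟩
    · intro S hS
      have : S = ∅ := Finset.subset_empty.1 (hS.trans (Finset.sdiff_subset))
      subst this
      simp [edgesIn_empty]
    · simp
  | succ n ih =>
    intro c R hn hc x hx hLP
    have hxnn : (0:ℝ) ≤ ∑ u ∈ R, c u * x u :=
      Finset.sum_nonneg fun u _ => mul_nonneg (hc u) (hx u)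
    by_cases h1 : ∀ S ⊆ R, edgesIn G S ≤ S.card
    · refine ⟨∅, Finset.empty_subset R, fun S hS => h1 S (hS.trans Finset.sdiff_subset), ?_⟩
      rw [Finset.sum_empty]
      linarith
    by_cases h2 : ∃ u ∈ R, c u = 0
    · obtain ⟨u, huR, hcu⟩ := h2
      have hcard1 : 1 ≤ R.card := Finset.card_pos.2 ⟨u, huR⟩
      have hmeas : (R.erase u).card + ((R.erase u).filter fun v => c v ≠ 0).card ≤ n := by
        have e1 : (R.erase u).card = R.card - 1 := Finset.card_erase_of_mem huR
        have e2 : ((R.erase u).filter fun v => c v ≠ 0).card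
            ≤ (R.filter fun v => c v ≠ 0).card :=
          Finset.card_le_card (Finset.filter_subset_filter _ (Finset.erase_subset u R))
        omega
      obtain ⟨U', hU'sub, hU'nd, hU'cost⟩ := ih c (R.erase u) hmeas hc x hx hLP
      have huU' : u ∉ U' := fun h => Finset.notMem_erase u R (hU'sub h)
      refine ⟨insert u U', Finset.insert_subset huR (hU'sub.trans (Finset.erase_subset u R)),
        ?_, ?_⟩
      · intro S hS
        apply hU'nd S
        intro v hv
        have hv' := hS hv
        rcases Finset.mem_sdiff.1 hv' with ⟨hvR, hvU⟩
        refine Finset.mem_sdiff.2 ⟨Finset.mem_erase.2 ⟨?_, hvR⟩, ?_⟩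
        · intro h; exact hvU (h ▸ Finset.mem_insert_self u U')
        · intro h; exact hvU (Finset.mem_insert_of_mem h)
      · rw [Finset.sum_insert huU', hcu]
        have hsum : ∑ v ∈ R, c v * x v = c u * x u + ∑ v ∈ R.erase u, c v * x v :=
          (Finset.add_sum_erase R (fun v => c v * x v) huR).symm
        rw [hcu] at hsum
        linarith
    by_cases h3 : ∃ u ∈ R, degIn G R u ≤ 1
    · obtain ⟨u, huR, hdeg1⟩ := h3
      have hcard1 : 1 ≤ R.card := Finset.card_pos.2 ⟨u, huR⟩
      have hmeas : (R.erase u).card + ((R.erase u).filter fun v => c v ≠ 0).card ≤ n := by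
        have e1 : (R.erase u).card = R.card - 1 := Finset.card_erase_of_mem huR
        have e2 : ((R.erase u).filter fun v => c v ≠ 0).card
            ≤ (R.filter fun v => c v ≠ 0).card :=
          Finset.card_le_card (Finset.filter_subset_filter _ (Finset.erase_subset u R))
        omega
      obtain ⟨U', hU'sub, hU'nd, hU'cost⟩ := ih c (R.erase u) hmeas hc x hx hLP
      refine ⟨U', hU'sub.trans (Finset.erase_subset u R), ?_, ?_⟩
      · intro S hS
        by_cases huS : u ∈ S
        · have hS'sub : S.erase u ⊆ (R.erase u) \ U' := by
            intro v hv
            rcases Finset.mem_erase.1 hv with ⟨hne, hvS⟩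
            rcases Finset.mem_sdiff.1 (hS hvS) with ⟨hvR, hvU⟩
            exact Finset.mem_sdiff.2 ⟨Finset.mem_erase.2 ⟨hne, hvR⟩, hvU⟩
          have h6 : edgesIn G S = edgesIn G (S.erase u) + degIn G (S.erase u) u := by
            conv_lhs => rw [← Finset.insert_erase huS]
            rw [edgesIn_insert G (Finset.notMem_erase u S)]
          have h7 : degIn G (S.erase u) u ≤ degIn G R u :=
            degIn_mono G (fun v hv => (Finset.mem_sdiff.1
              (hS (Finset.mem_of_mem_erase hv))).1) u
          have h8 := hU'nd (S.erase u) hS'sub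
          have h9 : S.card = (S.erase u).card + 1 := by
            rw [Finset.card_erase_of_mem huS]
            have : 1 ≤ S.card := Finset.card_pos.2 ⟨u, huS⟩
            omega
          omega
        · apply hU'nd S
          intro v hv
          rcases Finset.mem_sdiff.1 (hS hv) with ⟨hvR, hvU⟩
          refine Finset.mem_sdiff.2 ⟨Finset.mem_erase.2 ⟨?_, hvR⟩, hvU⟩
          intro h; exact huS (h ▸ hv)
      · have hsum : ∑ v ∈ R, c v * x v = c u * x u + ∑ v ∈ R.erase u, c v * x v :=
          (Finset.add_sum_erase R (fun v => c v * x v) huR).symm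
        have := mul_nonneg (hc u) (hx u)
        linarith
    -- case 4
    push_neg at h1 h2 h3
    obtain ⟨S₀, hS₀R, hS₀dense⟩ := h1
    have hRne : R.Nonempty := by
      rcases Finset.eq_empty_or_nonempty S₀ with rfl | ⟨v, hv⟩
      · rw [edgesIn_empty] at hS₀dense; omega
      · exact ⟨v, hS₀R hv⟩
    set w : V → ℝ := fun u => (degIn G R u : ℝ) - 1 with hw
    have hwpos : ∀ u ∈ R, (1:ℝ) ≤ w u := by
      intro u hu
      have := h3 u hu
      rw [hw]
      simp only []
      have : (2:ℝ) ≤ (degIn G R u : ℝ) := by exact_mod_cast this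
      linarith
    obtain ⟨u₀, hu₀R, hu₀min⟩ := Finset.exists_min_image R (fun u => c u / w u) hRne
    set ε := c u₀ / w u₀ with hε
    have hcpos : ∀ u ∈ R, 0 < c u := fun u hu => lt_of_le_of_ne (hc u) (Ne.symm (h2 u hu))
    have hw₀pos : (0:ℝ) < w u₀ := lt_of_lt_of_le one_pos (hwpos u₀ hu₀R)
    have hεpos : 0 < ε := div_pos (hcpos u₀ hu₀R) hw₀pos
    set c' : V → ℝ := fun u => if u ∈ R then c u - ε * w u else c u with hc'
    have hc'nonneg : ∀ u, 0 ≤ c' u := by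
      intro u
      rw [hc']
      simp only []
      split
      · next hu =>
        have h := hu₀min u hu
        have hwu : (0:ℝ) < w u := lt_of_lt_of_le one_pos (hwpos u hu)
        rw [sub_nonneg]
        calc ε * w u ≤ (c u / w u) * w u := mul_le_mul_of_nonneg_right h (le_of_lt hwu)
        _ = c u := div_mul_cancel₀ _ (ne_of_gt hwu)
      · exact hc u
    have hc'u₀ : c' u₀ = 0 := by
      rw [hc']
      simp only [if_pos hu₀R, hε]
      field_simp
      ring
    have hmeas : R.card + (R.filter fun v => c' v ≠ 0).card ≤ n := by
      have hsub : R.filter (fun v => c' v ≠ 0) ⊆ R.erase u₀ := by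
        intro v hv
        rcases Finset.mem_filter.1 hv with ⟨hvR, hvne⟩
        refine Finset.mem_erase.2 ⟨?_, hvR⟩
        intro h
        exact hvne (h ▸ hc'u₀)
      have h5 : (R.filter fun v => c' v ≠ 0).card ≤ R.card - 1 := by
        calc (R.filter fun v => c' v ≠ 0).card ≤ (R.erase u₀).card :=
          Finset.card_le_card hsub
        _ = R.card - 1 := Finset.card_erase_of_mem hu₀R
      have h6 : R.filter (fun v => c v ≠ 0) = R :=
        Finset.filter_eq_self.2 (fun v hv => h2 v hv)
      rw [h6] at hn
      have : 1 ≤ R.card := Finset.card_pos.2 hRne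
      omega
    obtain ⟨U'', hU''sub, hU''nd, hU''cost⟩ := ih c' R hmeas hc'nonneg x hx hLP
    set 𝒰 := (U''.powerset).filter (fun U => ∀ S ⊆ R \ U, edgesIn G S ≤ S.card) with h𝒰
    have h𝒰ne : 𝒰.Nonempty :=
      ⟨U'', Finset.mem_filter.2 ⟨Finset.mem_powerset_self _, hU''nd⟩⟩
    obtain ⟨U, hU𝒰, hUmin⟩ := Finset.exists_min_image 𝒰 Finset.card h𝒰ne
    rcases Finset.mem_filter.1 hU𝒰 with ⟨hUpow, hUnd⟩
    have hUU'' : U ⊆ U'' := Finset.mem_powerset.1 hUpow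
    have hUR : U ⊆ R := hUU''.trans hU''sub
    have hminimal : ∀ u ∈ U, ∃ S, S ⊆ insert u (R \ U) ∧ S.card + 1 ≤ edgesIn G S := by
      intro u huU
      by_contra hno
      push_neg at hno
      have hnd' : ∀ S ⊆ R \ (U.erase u), edgesIn G S ≤ S.card := by
        intro S hS
        by_contra hcon
        push_neg at hcon
        have hSsub : S ⊆ insert u (R \ U) := by
          intro v hv
          rcases Finset.mem_sdiff.1 (hS hv) with ⟨hvR, hvU⟩
          by_cases hvu : v = u
          · rw [hvu]; exact Finset.mem_insert_self u _
          · refine Finset.mem_insert_of_mem (Finset.mem_sdiff.2 ⟨hvR, ?_⟩)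
            intro hvU'
            exact hvU (Finset.mem_erase.2 ⟨hvu, hvU'⟩)
        have := hno S hSsub
        omega
      have hmem : U.erase u ∈ 𝒰 := Finset.mem_filter.2
        ⟨Finset.mem_powerset.2 ((Finset.erase_subset u U).trans hUU''), hnd'⟩
      have h5 := hUmin _ hmem
      have h6 := Finset.card_erase_of_mem huU
      have h7 : 1 ≤ U.card := Finset.card_pos.2 ⟨u, huU⟩
      omega
    have hdisjUW : Disjoint U (R \ U) := Finset.disjoint_sdiff
    have hUnion : U ∪ (R \ U) = R := Finset.union_sdiff_of_subset hUR
    have hdegR : ∀ v ∈ U ∪ (R \ U), 2 ≤ degIn G (U ∪ (R \ U)) v := by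
      rw [hUnion]
      intro v hv
      have := h3 v hv
      omega
    have hA := lemmaA G hdisjUW (fun S hS => hUnd S hS) hminimal hdegR
    rw [hUnion] at hA
    have hAR : ∑ u ∈ U, w u ≤ 3 * ((edgesIn G R : ℝ) - R.card) := by
      have h5 : ∑ u ∈ U, w u = (∑ u ∈ U, (degIn G R u : ℕ) : ℝ) - U.card := by
        rw [hw]
        push_cast
        rw [Finset.sum_sub_distrib, Finset.sum_const, nsmul_eq_mul, mul_one]
      rw [h5]
      have h6 : ((∑ u ∈ U, degIn G R u : ℕ) : ℝ) + 3 * (R.card : ℝ)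
          ≤ 3 * (edgesIn G R : ℝ) + U.card := by exact_mod_cast hA
      push_cast at h6
      linarith
    have hLPR := hLP R
    refine ⟨U, hUR, hUnd, ?_⟩
    have hcc' : ∀ u ∈ R, c u = c' u + ε * w u := by
      intro u hu
      rw [hc']
      simp only [if_pos hu]
      ring
    have hcostU : ∑ u ∈ U, c u = ∑ u ∈ U, c' u + ε * ∑ u ∈ U, w u := by
      rw [Finset.sum_congr rfl (fun u hu => hcc' u (hUR hu)), Finset.sum_add_distrib,
        Finset.mul_sum]
    have hU'c' : ∑ u ∈ U, c' u ≤ ∑ u ∈ U'', c' u :=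
      Finset.sum_le_sum_of_subset_of_nonneg hUU'' (fun i _ _ => hc'nonneg i)
    have hRsum : ∑ u ∈ R, c u * x u = ∑ u ∈ R, c' u * x u + ε * ∑ u ∈ R, w u * x u := by
      rw [Finset.mul_sum, ← Finset.sum_add_distrib]
      refine Finset.sum_congr rfl (fun u hu => ?_)
      rw [hcc' u hu]
      ring
    have hwLP : 3 * ((edgesIn G R : ℝ) - R.card) ≤ 3 * ∑ u ∈ R, w u * x u := by
      have : ∑ u ∈ R, ((degIn G R u : ℝ) - 1) * x u = ∑ u ∈ R, w u * x u := by
        refine Finset.sum_congr rfl (fun u _ => ?_)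
        rw [hw]
      linarith [hLPR, this ▸ hLPR]
    calc ∑ u ∈ U, c u = ∑ u ∈ U, c' u + ε * ∑ u ∈ U, w u := hcostU
    _ ≤ 3 * ∑ u ∈ R, c' u * x u + ε * (3 * ((edgesIn G R : ℝ) - R.card)) := by
        have := mul_le_mul_of_nonneg_left hAR (le_of_lt hεpos)
        linarith [hU'c'.trans hU''cost]
    _ ≤ 3 * ∑ u ∈ R, c' u * x u + ε * (3 * ∑ u ∈ R, w u * x u) := by
        have := mul_le_mul_of_nonneg_left hwLP (le_of_lt hεpos)
        linarith
    _ = 3 * ∑ u ∈ R, c u * x u := by rw [hRsum]; ring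

end Aux

noncomputable section Aux2

variable {V : Type*} [Fintype V] (G : SimpleGraph V)

set_option linter.unusedSectionVars false

lemma sub_pwd {x : V → ℝ} {y : Sym2 V → V → ℝ} (h : POrient G x y) (S : Finset V) :
    (edgesIn G S : ℝ) - S.card ≤ ∑ u ∈ S, ((degIn G S u : ℝ) - 1) * x u := by
  classical
  obtain ⟨h1, h2, h3, h4, _⟩ := h
  set ES := G.edgeFinset.filter (fun e => ∀ v ∈ e, v ∈ S) with hES
  have hperE : ∀ e ∈ ES, (1:ℝ) ≤ ∑ u ∈ Finset.univ.filter (· ∈ e), (x u + y e u) := by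
    intro e he
    rcases Finset.mem_filter.1 he with ⟨heE, hend⟩
    induction e using Sym2.ind with
    | _ a b =>
      have hadj : G.Adj a b := by simpa using heE
      have hab : a ≠ b := hadj.ne
      have hset : Finset.univ.filter (· ∈ s(a,b)) = {a, b} := by
        ext v
        simp [Sym2.mem_iff]
      rw [hset, Finset.sum_pair hab]
      have := h1 a b hadj
      linarith
  have hcount : (ES.card : ℝ) ≤ ∑ e ∈ ES, ∑ u ∈ Finset.univ.filter (· ∈ e), (x u + y e u) := by
    calc (ES.card : ℝ) = ∑ _e ∈ ES, (1:ℝ) := by rw [Finset.sum_const]; simp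
    _ ≤ _ := Finset.sum_le_sum hperE
  have hexch : ∑ e ∈ ES, ∑ u ∈ Finset.univ.filter (· ∈ e), (x u + y e u)
      = ∑ u : V, ∑ e ∈ ES.filter (fun e => u ∈ e), (x u + y e u) := by
    have l1 : ∀ e ∈ ES, ∑ u ∈ Finset.univ.filter (· ∈ e), (x u + y e u)
        = ∑ u : V, (if u ∈ e then x u + y e u else 0) :=
      fun e _ => (Finset.sum_filter _ _)
    have l2 : ∀ u : V, ∑ e ∈ ES.filter (fun e => u ∈ e), (x u + y e u)
        = ∑ e ∈ ES, (if u ∈ e then x u + y e u else 0) :=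
      fun u => (Finset.sum_filter _ _)
    rw [Finset.sum_congr rfl l1, Finset.sum_comm]
    exact (Finset.sum_congr rfl (fun u _ => (l2 u).symm))
  have hu_out : ∀ u, u ∉ S → ES.filter (fun e => u ∈ e) = ∅ := by
    intro u hu
    rw [Finset.filter_eq_empty_iff]
    intro e he hue
    exact hu ((Finset.mem_filter.1 he).2 u hue)
  have hzero : ∀ u ∈ Finset.univ \ S,
      ∑ e ∈ ES.filter (fun e => u ∈ e), (x u + y e u) = 0 := by
    intro u hu
    rw [hu_out u (Finset.mem_sdiff.1 hu).2, Finset.sum_empty]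
  have hrestrict : ∑ u : V, ∑ e ∈ ES.filter (fun e => u ∈ e), (x u + y e u)
      = ∑ u ∈ S, ∑ e ∈ ES.filter (fun e => u ∈ e), (x u + y e u) := by
    rw [← Finset.sum_subset (Finset.subset_univ S)]
    intro u _ hu
    rw [hu_out u hu, Finset.sum_empty]
  have hysum : ∀ u, ∑ e ∈ ES.filter (fun e => u ∈ e), y e u ≤ 1 - x u := by
    intro u
    have hsub : ES.filter (fun e => u ∈ e) ⊆ G.edgeFinset.filter (fun e => u ∈ e) := by
      intro e he
      rcases Finset.mem_filter.1 he with ⟨heES, hue⟩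
      exact Finset.mem_filter.2 ⟨(Finset.mem_filter.1 heES).1, hue⟩
    have hle := Finset.sum_le_sum_of_subset_of_nonneg hsub (fun e _ _ => h4 e u)
    have h2u := h2 u
    linarith
  have hperu : ∀ u ∈ S, ∑ e ∈ ES.filter (fun e => u ∈ e), (x u + y e u)
      ≤ (degIn G S u : ℝ) * x u + (1 - x u) := by
    intro u hu
    have hcard : (ES.filter (fun e => u ∈ e)).card = degIn G S u := card_edges_through G hu
    have : ∑ e ∈ ES.filter (fun e => u ∈ e), (x u + y e u)
        = (ES.filter (fun e => u ∈ e)).card * x u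
          + ∑ e ∈ ES.filter (fun e => u ∈ e), y e u := by
      rw [Finset.sum_add_distrib, Finset.sum_const, nsmul_eq_mul]
    rw [this, hcard]
    have := hysum u
    linarith
  have hfinal : (ES.card : ℝ) ≤ ∑ u ∈ S, ((degIn G S u : ℝ) * x u + (1 - x u)) := by
    calc (ES.card : ℝ) ≤ _ := hcount
    _ = _ := hexch
    _ = _ := hrestrict
    _ ≤ _ := Finset.sum_le_sum hperu
  have hsplit : ∑ u ∈ S, ((degIn G S u : ℝ) * x u + (1 - x u))
      = ∑ u ∈ S, ((degIn G S u : ℝ) - 1) * x u + S.card := by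
    have hcg : ∀ u ∈ S, (degIn G S u : ℝ) * x u + (1 - x u)
        = ((degIn G S u : ℝ) - 1) * x u + 1 := fun u _ => by ring
    rw [Finset.sum_congr rfl hcg, Finset.sum_add_distrib, Finset.sum_const,
      nsmul_eq_mul, mul_one]
  have hES' : edgesIn G S = ES.card := rfl
  rw [hES']
  linarith [hfinal, hsplit]

lemma bridge_abstract {W : Type*} [Fintype W] (H : SimpleGraph W)
    (f : W → V) (hinj : Function.Injective f)
    (hadj : ∀ a b : W, H.Adj a b → G.Adj (f a) (f b))
    (h : ∀ S : Finset V, (∀ v ∈ S, ∃ w : W, f w = v) → edgesIn G S ≤ S.card) :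
    IsPseudoforest H := by
  classical
  intro C
  set SC : Finset V := (Finset.univ.filter
    fun w : W => H.connectedComponentMk w = C).image f with hSCdef
  have hvert : (Finset.univ.filter
      fun w : W => H.connectedComponentMk w = C).card = SC.card :=
    (Finset.card_image_of_injective _ hinj).symm
  have hedge : (H.edgeFinset.filter fun e => ∀ v ∈ e,
      H.connectedComponentMk v = C).card ≤ edgesIn G SC := by
    unfold edgesIn
    refine Finset.card_le_card_of_injOn (Sym2.map f) ?_
      ((Sym2.map.injective hinj).injOn)
    intro e he
    rcases Finset.mem_filter.1 he with ⟨heE, hend⟩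
    induction e using Sym2.ind with
    | _ a b =>
      have hHadj : H.Adj a b := by simpa using heE
      refine Finset.mem_filter.2 ⟨by simpa using hadj a b hHadj, ?_⟩
      intro v hv
      rw [Sym2.map_pair_eq] at hv
      rcases Sym2.mem_iff.1 hv with rfl | rfl
      · exact Finset.mem_image_of_mem f (Finset.mem_filter.2
          ⟨Finset.mem_univ _, hend a (Sym2.mem_mk_left _ _)⟩)
      · exact Finset.mem_image_of_mem f (Finset.mem_filter.2
          ⟨Finset.mem_univ _, hend b (Sym2.mem_mk_right _ _)⟩)
  have hb := h SC (by
    intro v hv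
    rcases Finset.mem_image.1 hv with ⟨w, _, rfl⟩
    exact ⟨w, rfl⟩)
  omega

lemma bridge (U : Finset V) (h : ∀ S ⊆ Finset.univ \ U, edgesIn G S ≤ S.card) :
    IsPFDS G U := by
  refine bridge_abstract G (G.induce {v : V | v ∉ U}) Subtype.val Subtype.val_injective
    (fun a b hab => hab) ?_
  intro S hS
  refine h S ?_
  intro v hv
  obtain ⟨w, rfl⟩ := hS v hv
  exact Finset.mem_sdiff.2 ⟨Finset.mem_univ _, w.2⟩

end Aux2


/-- the integrality gap of the LP relaxation
`min {Σ c_u x_u : x ∈ Q_orient(G)}` of PFDS is at most `3`: for every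
`x ∈ Q_orient(G)` there is a pseudoforest deletion set `U` with
`Σ_{u ∈ U} c(u) ≤ 3 Σ_{u ∈ V} c(u) x_u`. -/
theorem stmt_15 {V : Type*} [Fintype V] (G : SimpleGraph V)
    (c : V → ℝ) (hc : ∀ u, 0 ≤ c u) (x : V → ℝ) (hx : QOrient G x) :
    ∃ U : Finset V, IsPFDS G U ∧ ∑ u ∈ U, c u ≤ 3 * ∑ u, c u * x u := by
  classical
  obtain ⟨y, hy⟩ := hx
  have hLP : ∀ S : Finset V, (edgesIn G S : ℝ) - S.card
      ≤ ∑ u ∈ S, ((degIn G S u : ℝ) - 1) * x u := fun S => sub_pwd G hy S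
  have hx0 : ∀ u, 0 ≤ x u := hy.2.2.1
  obtain ⟨U, hUsub, hUnd, hUcost⟩ := mainLemma G
    (Finset.univ.card + (Finset.univ.filter fun u => c u ≠ 0).card) c Finset.univ
    le_rfl hc x hx0 hLP
  exact ⟨U, bridge G U (fun S hS => hUnd S hS), hUcost⟩

end FVS
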